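/- Let m ≥ 1, let u : [m+1] → ℝ^m be affinely independent (a full-dimensional simplex in ℝ^m) and let c ∈ ℝ^m satisfy ⟪c, u_i⟫ < ⟪c, u_j⟫ for all i < j. For every strongly generic ω ∈ ℝ^m, the image under the slope map θ of the set {ω′ ∈ ℝ^m : ω′ strongly generic and A^{ω′} = A^ω} equals the set of all x ∈ ℝ^m whose coordinates are pairwise distinct and whose sorting permutation σ (the permutation of [m] with x_{σ(1)} < ⋯ < x_{σ(m)}) satisfies σ ≡sylv π^ω. -/

import Mathlib

open scoped RealInnerProductSpace

/-- The slope `ρ^ω(i,j)` of the edge from vertex `u i` to vertex `u j`,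
with respect to the objective direction `c`. -/
noncomputable def rho {n d : ℕ} (u : Fin n → EuclideanSpace ℝ (Fin d))
    (c ω : EuclideanSpace ℝ (Fin d)) (i j : Fin n) : ℝ :=
  ⟪ω, u j - u i⟫ / ⟪c, u j - u i⟫

/-- `τ^ω(i)`: the maximal slope from vertex `i` to a later vertex
(the supremum of the finite set of slopes `ρ^ω(i,j)` for `i < j`;
it is meaningful for non-maximal `i`, where this set is nonempty). -/
noncomputable def tau {n d : ℕ} (u : Fin n → EuclideanSpace ℝ (Fin d))
    (c ω : EuclideanSpace ℝ (Fin d)) (i : Fin n) : ℝ :=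
  sSup {x : ℝ | ∃ j : Fin n, i < j ∧ x = rho u c ω i j}

/-- `ω` is generic: for each non-maximal vertex `i` there is a unique `j > i`
whose slope attains the maximal slope `τ^ω(i)`. -/
def Generic {n d : ℕ} (u : Fin n → EuclideanSpace ℝ (Fin d))
    (c ω : EuclideanSpace ℝ (Fin d)) : Prop :=
  ∀ i : Fin n, (i : ℕ) + 1 < n →
    ∃! j : Fin n, i < j ∧ rho u c ω i j = tau u c ω i

/-- `A` is the max-slope arborescence `A^ω`: it fixes the maximal vertex, and
sends every other vertex `i` to an improving neighbour attaining `τ^ω(i)`. -/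
def IsArbo {n d : ℕ} (u : Fin n → EuclideanSpace ℝ (Fin d))
    (c ω : EuclideanSpace ℝ (Fin d)) (A : Fin n → Fin n) : Prop :=
  (∀ i : Fin n, (i : ℕ) + 1 = n → A i = i) ∧
  (∀ i : Fin n, (i : ℕ) + 1 < n →
    i < A i ∧ rho u c ω i (A i) = tau u c ω i)

/-- `ω` is strongly generic: it is generic and the slopes
`τ^ω(1), …, τ^ω(m)` at the `m` non-maximal vertices are pairwise distinct. -/
def StronglyGeneric {m d : ℕ} (u : Fin (m + 1) → EuclideanSpace ℝ (Fin d))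
    (c ω : EuclideanSpace ℝ (Fin d)) : Prop :=
  Generic u c ω ∧ Function.Injective fun i : Fin m => tau u c ω i.castSucc

/-- One step of the sylvester rewriting rule on permutations of `[m]` (in
one-line notation): the letters at two consecutive positions `a, b = a+1`
may be exchanged whenever some letter strictly between them in value appears
at an earlier position (`U j V i k W ≡ U j V k i W` for letters `i < j < k`). -/
def SylvRel (m : ℕ) (π π' : Equiv.Perm (Fin m)) : Prop :=
  ∃ a b : Fin m, (a : ℕ) + 1 = (b : ℕ) ∧ π' = π * Equiv.swap a b ∧
    ∃ e : Fin m, e < a ∧ min (π a) (π b) < π e ∧ π e < max (π a) (π b)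

/-- The sylvester congruence: the equivalence relation on permutations of `[m]`
generated by the sylvester rewriting rule. -/
def Sylv (m : ℕ) : Equiv.Perm (Fin m) → Equiv.Perm (Fin m) → Prop :=
  Relation.EqvGen (SylvRel m)

/-- The slope map `θ : ℝ^m → ℝ^m`, sending `ω` to its slope vector
`(τ^ω(1), …, τ^ω(m))`. -/
noncomputable def theta {m : ℕ} (u : Fin (m + 1) → EuclideanSpace ℝ (Fin m))
    (c : EuclideanSpace ℝ (Fin m)) (ω : EuclideanSpace ℝ (Fin m)) : Fin m → ℝ :=
  fun i => tau u c ω i.castSucc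

/-! Combinatorial layer -/

/-- Base order relation on letters determined by arborescence data `An`. -/
def BaseRel (m : ℕ) (An : ℕ → ℕ) (p q : Fin m) : Prop :=
  ((p : ℕ) < (q : ℕ) ∧ (q : ℕ) < An p) ∨ (p : ℕ) = An q

/-- Transitive closure. -/
abbrev TB (m : ℕ) (An : ℕ → ℕ) : Fin m → Fin m → Prop :=
  Relation.TransGen (BaseRel m An)

/-- `σ` is a linear extension of the base relation (letters ordered by positions
via `σ.symm`). -/
def LinExt (m : ℕ) (An : ℕ → ℕ) (σ : Equiv.Perm (Fin m)) : Prop :=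
  ∀ p q : Fin m, BaseRel m An p q → σ.symm p < σ.symm q

section Comb

variable {m : ℕ} {An : ℕ → ℕ}

lemma linext_tb {σ : Equiv.Perm (Fin m)} (hσ : LinExt m An σ) {p q : Fin m}
    (h : TB m An p q) : σ.symm p < σ.symm q := by
  induction h with
  | single h => exact hσ _ _ h
  | tail _ h ih => exact ih.trans (hσ _ _ h)

variable (hAn : ∀ i : ℕ, i < m → i < An i ∧ An i ≤ m)
include hAn

lemma base_between {p q j : Fin m} (h : BaseRel m An p q)
    (h1 : min (p:ℕ) (q:ℕ) < (j:ℕ)) (h2 : (j:ℕ) < max (p:ℕ) (q:ℕ)) :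
    TB m An p j := by
  rcases h with ⟨hpq, hq⟩ | hp
  · refine Relation.TransGen.single (Or.inl ⟨?_, ?_⟩) <;> omega
  · -- p = An q, so q < p, and q < j < p = An q
    have hq := (hAn q q.2).1
    have hqp : (q:ℕ) < (p:ℕ) := by omega
    refine Relation.TransGen.head (Or.inr hp) (Relation.TransGen.single (Or.inl ⟨?_, ?_⟩)) <;>
      omega

lemma tb_between {p q j : Fin m} (h : TB m An p q)
    (h1 : min (p:ℕ) (q:ℕ) < (j:ℕ)) (h2 : (j:ℕ) < max (p:ℕ) (q:ℕ)) :
    TB m An p j := by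
  induction h generalizing j with
  | single h => exact base_between hAn h h1 h2
  | @tail b c hpb hbc ih =>
    rcases eq_or_ne (j:ℕ) (b:ℕ) with hjb | hjb
    · have : j = b := Fin.ext hjb
      subst this; exact hpb
    · by_cases hcase : min (p:ℕ) (b:ℕ) < (j:ℕ) ∧ (j:ℕ) < max (p:ℕ) (b:ℕ)
      · exact ih hcase.1 hcase.2
      · have hb : min (b:ℕ) (c:ℕ) < (j:ℕ) ∧ (j:ℕ) < max (b:ℕ) (c:ℕ) := by
          simp only [min_def, max_def] at *
          split_ifs at * <;> omega
        exact hpb.trans (base_between hAn hbc hb.1 hb.2)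

lemma exists_between_below {p q : Fin m} (hpq : (p:ℕ) < (q:ℕ))
    (h1 : ¬ TB m An p q) (h2 : ¬ TB m An q p) :
    ∃ j : Fin m, (p:ℕ) < (j:ℕ) ∧ (j:ℕ) < (q:ℕ) ∧ TB m An j p := by
  have hp := hAn p p.2
  by_cases hq : (q:ℕ) < An p
  · exact absurd (Relation.TransGen.single (show BaseRel m An p q from Or.inl ⟨hpq, hq⟩)) h1
  · by_cases he : An (p:ℕ) = (q:ℕ)
    · exact absurd (Relation.TransGen.single (show BaseRel m An q p from Or.inr he.symm)) h2
    · have hlt : An (p:ℕ) < (q:ℕ) := by omega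
      have hjm : An (p:ℕ) < m := lt_of_lt_of_le hlt q.2.le
      refine ⟨⟨An p, hjm⟩, by simpa using hp.1, by simpa using hlt,
        Relation.TransGen.single (Or.inr ?_)⟩
      simp
end Comb

section Swap

variable {m : ℕ}

lemma swap_adj_lt {a b P Q : Fin m} (hab : (a:ℕ) + 1 = (b:ℕ)) (hPQ : P < Q)
    (hne : ¬(P = a ∧ Q = b)) :
    Equiv.swap a b P < Equiv.swap a b Q := by
  simp only [Equiv.swap_apply_def]
  split_ifs <;> fin_omega

lemma sylvRel_symm {σ σ' : Equiv.Perm (Fin m)} (h : SylvRel m σ σ') :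
    SylvRel m σ' σ := by
  obtain ⟨a, b, hab, hσ', e, he, h1, h2⟩ := h
  have hne : a ≠ b := by simp [Fin.ext_iff]; omega
  have hea : e ≠ a := Fin.ne_of_lt he
  have heb : e ≠ b := by rw [ne_eq, Fin.ext_iff]; have := Fin.lt_def.1 he; omega
  have hb : σ' a = σ b := by rw [hσ']; simp [Equiv.swap_apply_left]
  have ha : σ' b = σ a := by rw [hσ']; simp [Equiv.swap_apply_right]
  have hee : σ' e = σ e := by rw [hσ']; simp [Equiv.swap_apply_of_ne_of_ne hea heb]
  refine ⟨a, b, hab, ?_, e, he, ?_, ?_⟩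
  · rw [hσ', mul_assoc, Equiv.swap_mul_self, mul_one]
  · rw [hb, ha, hee, min_comm]; exact h1
  · rw [hb, ha, hee, max_comm]; exact h2

variable {An : ℕ → ℕ} (hAn : ∀ i : ℕ, i < m → i < An i ∧ An i ≤ m)
include hAn

lemma linExt_of_sylvRel {σ σ' : Equiv.Perm (Fin m)} (h : SylvRel m σ σ')
    (hσ : LinExt m An σ) : LinExt m An σ' := by
  obtain ⟨a, b, hab, hσ', e, he, h1, h2⟩ := h
  intro p q hpq
  have hPQ : σ.symm p < σ.symm q := hσ _ _ hpq
  have hsymm : σ'.symm = Equiv.trans σ.symm (Equiv.swap a b) := by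
    rw [hσ']; ext x; simp [Equiv.Perm.mul_def, Equiv.swap_inv]
  rw [hsymm]
  simp only [Equiv.trans_apply]
  refine swap_adj_lt hab hPQ ?_
  rintro ⟨hp, hq⟩
  -- then p = σ a, q = σ b and BaseRel p q, contradiction via betweenness at σ e
  have hpa : p = σ a := by rw [← hp]; simp
  have hqb : q = σ b := by rw [← hq]; simp
  subst hpa hqb
  have htb : TB m An (σ a) (σ e) := by
    refine tb_between hAn (Relation.TransGen.single hpq) ?_ ?_
    · simpa only [Fin.lt_def, Fin.coe_min] using h1
    · simpa only [Fin.lt_def, Fin.coe_max] using h2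
  have := linext_tb hσ htb
  simp only [Equiv.symm_apply_apply] at this
  exact absurd (this.trans he) (lt_irrefl _)

lemma linExt_of_sylv {σ π : Equiv.Perm (Fin m)} (h : Sylv m σ π)
    (hπ : LinExt m An π) : LinExt m An σ := by
  have key : ∀ σ₁ σ₂, Sylv m σ₁ σ₂ → (LinExt m An σ₁ ↔ LinExt m An σ₂) := by
    intro σ₁ σ₂ h
    induction h with
    | rel _ _ h => exact ⟨linExt_of_sylvRel hAn h, linExt_of_sylvRel hAn (sylvRel_symm h)⟩
    | refl => exact Iff.rfl
    | symm _ _ _ ih => exact ih.symm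
    | trans _ _ _ _ _ ih1 ih2 => exact ih1.trans ih2
  exact (key σ π h).mpr hπ

end Swap

section Connect

variable {m : ℕ}

/-- The set of discordant pairs between two permutations. -/
def Discord (σ σ' : Equiv.Perm (Fin m)) : Finset (Fin m × Fin m) :=
  Finset.univ.filter fun pq =>
    σ.symm pq.1 < σ.symm pq.2 ∧ σ'.symm pq.2 < σ'.symm pq.1

lemma perm_strictMono_eq_id (φ : Equiv.Perm (Fin m)) (h : StrictMono φ) :
    ∀ P, φ P = P := by
  have key : ∀ (ψ : Equiv.Perm (Fin m)), StrictMono ψ → ∀ P : Fin m, P ≤ ψ P := by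
    intro ψ hψ ⟨k, hk⟩
    induction k with
    | zero => exact Fin.le_def.2 (Nat.zero_le _)
    | succ k ih =>
      have hk' : k < m := Nat.lt_of_succ_lt hk
      have h1 : ψ ⟨k, hk'⟩ < ψ ⟨k + 1, hk⟩ := hψ (by simp [Fin.lt_def])
      have h2 := ih hk'
      rw [Fin.le_def] at h2 ⊢
      rw [Fin.lt_def] at h1
      simp only [Fin.val_mk] at h1 h2 ⊢
      omega
  have hsymm : StrictMono (φ.symm : Fin m → Fin m) := by
    intro P Q hPQ
    rcases lt_trichotomy (φ.symm P) (φ.symm Q) with h' | h' | h'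
    · exact h'
    · exfalso
      apply ne_of_lt hPQ
      rw [← Equiv.apply_symm_apply φ P, ← Equiv.apply_symm_apply φ Q, h']
    · exfalso
      have := h h'
      simp only [Equiv.apply_symm_apply] at this
      exact absurd (hPQ.trans this) (lt_irrefl _)
  intro P
  have h1 : P ≤ φ P := key φ h P
  have h2 : φ P ≤ φ.symm (φ P) := key φ.symm hsymm (φ P)
  simp only [Equiv.symm_apply_apply] at h2
  exact le_antisymm h2 h1

lemma eq_of_discord_empty {σ σ' : Equiv.Perm (Fin m)}
    (h : Discord σ σ' = ∅) : σ = σ' := by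
  have hmono : StrictMono fun P => σ'.symm (σ P) := by
    intro P Q hPQ
    have hne : σ'.symm (σ P) ≠ σ'.symm (σ Q) := by
      simp only [ne_eq, EmbeddingLike.apply_eq_iff_eq, EmbeddingLike.apply_eq_iff_eq]
      exact fun hh => absurd (hh ▸ hPQ) (lt_irrefl _)
    rcases lt_or_ge (σ'.symm (σ P)) (σ'.symm (σ Q)) with h' | h'
    · exact h'
    · exfalso
      have hmem : (σ P, σ Q) ∈ Discord σ σ' := by
        simp only [Discord, Finset.mem_filter, Finset.mem_univ, true_and,
          Equiv.symm_apply_apply]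
        exact ⟨hPQ, lt_of_le_of_ne h' hne.symm⟩
      rw [h] at hmem; exact absurd hmem (Finset.notMem_empty _)
  have hid := perm_strictMono_eq_id (σ.trans σ'.symm)
    (by intro P Q h'; simpa [Equiv.trans_apply] using hmono h')
  refine Equiv.ext fun P => ?_
  have hP := hid P
  simp only [Equiv.trans_apply] at hP
  exact ((Equiv.apply_symm_apply σ' (σ P)).symm.trans (congrArg σ' hP))

variable {An : ℕ → ℕ} (hAn : ∀ i : ℕ, i < m → i < An i ∧ An i ≤ m)
include hAn

lemma sylv_connect_aux : ∀ (N : ℕ) (σ σ' : Equiv.Perm (Fin m)),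
    LinExt m An σ → LinExt m An σ' → (Discord σ σ').card ≤ N → Sylv m σ σ' := by
  intro N
  induction N with
  | zero =>
    intro σ σ' _ _ hcard
    have : Discord σ σ' = ∅ := Finset.card_eq_zero.1 (Nat.le_zero.1 hcard)
    rw [eq_of_discord_empty this]
    exact Relation.EqvGen.refl _
  | succ N ih =>
    intro σ σ' hσ hσ' hcard
    by_cases heq : σ = σ'
    · rw [heq]; exact Relation.EqvGen.refl _
    have hDne : (Finset.univ.filter fun P : Fin m => σ P ≠ σ' P).Nonempty := by
      by_contra hne
      rw [Finset.not_nonempty_iff_eq_empty, Finset.filter_eq_empty_iff] at hne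
      exact heq (Equiv.ext fun P => not_ne_iff.1 (hne (Finset.mem_univ P)))
    set a₀ : Fin m := (Finset.univ.filter fun P : Fin m => σ P ≠ σ' P).min' hDne with ha₀
    have hmin : ∀ P : Fin m, P < a₀ → σ P = σ' P := by
      intro P hP
      by_contra hne
      exact absurd (Finset.min'_le _ P (by simp [hne])) (not_le.2 hP)
    have ha₀mem : σ a₀ ≠ σ' a₀ := by
      have := (Finset.univ.filter fun P : Fin m => σ P ≠ σ' P).min'_mem hDne
      rw [← ha₀] at this
      simpa using this
    set q : Fin m := σ' a₀ with hq
    set b : Fin m := σ.symm q with hb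
    have hσb : σ b = q := by rw [hb]; simp
    have hba₀ : b ≠ a₀ := by
      intro hh
      apply ha₀mem
      rw [← hh]
      exact hσb
    have ha₀b : a₀ < b := by
      rcases lt_trichotomy b a₀ with h' | h' | h'
      · exfalso
        have h1 := hmin b h'
        rw [hσb] at h1
        exact hba₀ (σ'.injective h1.symm)
      · exact absurd h' hba₀
      · exact h'
    have hbpos : 0 < (b : ℕ) := by
      have := Fin.lt_def.1 ha₀b; omega
    set a1 : Fin m := ⟨(b:ℕ) - 1, by omega⟩ with ha1
    have hA1 : (a1 : ℕ) + 1 = (b : ℕ) := by simp only [ha1]; omega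
    have ha₀a1 : (a₀ : ℕ) ≤ (a1 : ℕ) := by
      have := Fin.lt_def.1 ha₀b; simp only [ha1]; omega
    set r : Fin m := σ a1 with hr
    have ha1b : a1 ≠ b := by simp only [ne_eq, Fin.ext_iff]; omega
    have hsymr : σ.symm r = a1 := by rw [hr]; simp
    have hrq : r ≠ q := by
      intro hh
      apply ha1b
      rw [← hsymr, hh, hb]
    have hsymq : σ'.symm q = a₀ := by rw [hq]; simp
    have hr' : a₀ < σ'.symm r := by
      rcases lt_trichotomy (σ'.symm r) a₀ with h' | h' | h'
      · exfalso
        have h1 : σ (σ'.symm r) = σ' (σ'.symm r) := hmin _ h'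
        rw [Equiv.apply_symm_apply] at h1
        have h2 : σ.symm r = σ'.symm r := σ.injective (by simp [h1])
        rw [hsymr] at h2
        rw [← h2] at h'
        rw [Fin.lt_def] at h'
        omega
      · exfalso
        apply hrq
        rw [← hsymq] at h'
        exact σ'.symm.injective h'
      · exact h'
    have hnTB1 : ¬ TB m An q r := by
      intro hTB
      have h1 := linext_tb hσ hTB
      rw [hsymr, ← hb, Fin.lt_def] at h1
      omega
    have hnTB2 : ¬ TB m An r q := by
      intro hTB
      have h1 := linext_tb hσ' hTB
      rw [hsymq] at h1
      exact absurd (h1.trans hr') (lt_irrefl _)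
    -- find the witness letter j, located before position a1 in σ
    obtain ⟨j, hj1, hj2, hj3⟩ : ∃ j : Fin m, min (r:ℕ) (q:ℕ) < (j:ℕ) ∧
        (j:ℕ) < max (r:ℕ) (q:ℕ) ∧ (σ.symm j : ℕ) < (a1 : ℕ) := by
      rcases lt_or_gt_of_ne hrq with hlt | hlt
      · have hv : (r:ℕ) < (q:ℕ) := Fin.lt_def.1 hlt
        obtain ⟨j, h1, h2, h3⟩ := exists_between_below hAn hv hnTB2 hnTB1
        have h4 := linext_tb hσ h3
        rw [hsymr, Fin.lt_def] at h4
        exact ⟨j, by omega, by omega, h4⟩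
      · have hv : (q:ℕ) < (r:ℕ) := Fin.lt_def.1 hlt
        obtain ⟨j, h1, h2, h3⟩ := exists_between_below hAn hv hnTB1 hnTB2
        have h4 := linext_tb hσ h3
        rw [← hb, Fin.lt_def] at h4
        have h5 : (σ.symm j : ℕ) ≠ (a1 : ℕ) := by
          intro hh
          have hja : σ.symm j = a1 := Fin.ext hh
          have hjr : j = r := by rw [← hsymr] at hja; exact σ.symm.injective hja
          rw [hjr] at h2
          omega
        exact ⟨j, by omega, by omega, by omega⟩
    set e : Fin m := σ.symm j with he
    have hσe : σ e = j := by rw [he]; simp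
    have hSR : SylvRel m σ (σ * Equiv.swap a1 b) := by
      refine ⟨a1, b, hA1, rfl, e, Fin.lt_def.2 hj3, ?_, ?_⟩
      · rw [← hr, hσb, hσe, Fin.lt_def, Fin.coe_min]; exact hj1
      · rw [← hr, hσb, hσe, Fin.lt_def, Fin.coe_max]; exact hj2
    set σ'' : Equiv.Perm (Fin m) := σ * Equiv.swap a1 b with hσ''def
    have hσ''symm : ∀ x, σ''.symm x = Equiv.swap a1 b (σ.symm x) := by
      intro x
      rw [hσ''def]
      simp [Equiv.Perm.mul_def, Equiv.swap_inv]
    have hσ'' : LinExt m An σ'' := linExt_of_sylvRel hAn hSR hσ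
    have hrqmem : (r, q) ∈ Discord σ σ' := by
      simp only [Discord, Finset.mem_filter, Finset.mem_univ, true_and]
      constructor
      · rw [hsymr, ← hb, Fin.lt_def]; omega
      · rw [hsymq]; exact hr'
    have hrqnot : (r, q) ∉ Discord σ'' σ' := by
      simp only [Discord, Finset.mem_filter, Finset.mem_univ, true_and, not_and]
      intro hcon
      exfalso
      rw [hσ''symm, hσ''symm, hsymr, ← hb, Equiv.swap_apply_left, Equiv.swap_apply_right,
        Fin.lt_def] at hcon
      omega
    have hsub : Discord σ'' σ' ⊆ Discord σ σ' := by
      rintro ⟨p, q'⟩ hmem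
      simp only [Discord, Finset.mem_filter, Finset.mem_univ, true_and] at hmem ⊢
      obtain ⟨h1, h2⟩ := hmem
      rw [hσ''symm, hσ''symm] at h1
      refine ⟨?_, h2⟩
      rcases lt_trichotomy (σ.symm p) (σ.symm q') with h' | h' | h'
      · exact h'
      · exfalso
        have : p = q' := by
          have := congrArg σ h'
          simpa using this
        rw [this] at h2
        exact absurd h2 (lt_irrefl _)
      · exfalso
        by_cases hcase : σ.symm q' = a1 ∧ σ.symm p = b
        · have hq'r : q' = r := by
            rw [← hsymr] at hcase
            exact σ.symm.injective hcase.1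
          have hpq : p = q := by
            have hcc := hcase.2
            rw [hb] at hcc
            exact σ.symm.injective hcc
          rw [hq'r, hpq, hsymq] at h2
          exact absurd (h2.trans hr') (lt_irrefl _)
        · exact absurd (swap_adj_lt hA1 h' hcase) (asymm h1)
    have hlt : (Discord σ'' σ').card < (Discord σ σ').card :=
      Finset.card_lt_card ((Finset.ssubset_iff_of_subset hsub).2 ⟨(r, q), hrqmem, hrqnot⟩)
    have hS1 : Sylv m σ'' σ' := ih σ'' σ' hσ'' hσ' (by omega)
    exact Relation.EqvGen.trans _ _ _ (Relation.EqvGen.rel _ _ hSR) hS1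

lemma sylv_connect {σ σ' : Equiv.Perm (Fin m)}
    (hσ : LinExt m An σ) (hσ' : LinExt m An σ') : Sylv m σ σ' :=
  sylv_connect_aux hAn (Discord σ σ').card σ σ' hσ hσ' le_rfl

end Connect

section Sums

/-- Construction of numerator coefficients realizing the target slope vector `x`
for the arborescence `An`. -/
noncomputable def mkA (m : ℕ) (γ x : ℕ → ℝ) (An : ℕ → ℕ) : ℕ → ℝ
  | i =>
    if h : i < m then
      (∑ k ∈ Finset.Ico i (An i), γ k) * x i -
        ∑ k ∈ (Finset.Ico (i + 1) (An i)).attach, mkA m γ x An k.1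
    else 0
termination_by i => m - i
decreasing_by
  · have hk := k.2
    rw [Finset.mem_Ico] at hk
    omega

variable {m : ℕ} {γ x : ℕ → ℝ} {An : ℕ → ℕ}

lemma mkA_sum (hγ : ∀ k, k < m → 0 < γ k) {i : ℕ} (hi : i < m) (hAi : i < An i) :
    ∑ k ∈ Finset.Ico i (An i), mkA m γ x An k =
      (∑ k ∈ Finset.Ico i (An i), γ k) * x i := by
  rw [Finset.sum_eq_sum_Ico_succ_bot hAi]
  conv_lhs => rw [mkA]
  rw [dif_pos hi, ← Finset.sum_attach (Finset.Ico (i + 1) (An i)) (mkA m γ x An)]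
  ring

variable (hγ : ∀ k, k < m → 0 < γ k)
    (hAn : ∀ i : ℕ, i < m → i < An i ∧ An i ≤ m)
include hγ hAn

lemma gamma_sum_pos {i j : ℕ} (hij : i < j) (hj : j ≤ m) :
    0 < ∑ k ∈ Finset.Ico i j, γ k := by
  apply Finset.sum_pos
  · intro k hk
    rw [Finset.mem_Ico] at hk
    exact hγ k (by omega)
  · exact ⟨i, Finset.mem_Ico.2 ⟨le_rfl, hij⟩⟩

/-- Lower bound on partial sums over intervals "inside" a subtree. -/
lemma mkA_lower (v : ℝ)
    (hNC : ∀ i j : ℕ, i < m → i < j → j < An i → An j ≤ An i) :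
    ∀ (d j t : ℕ), t - j ≤ d → j < t → t ≤ m →
    (∀ k, j ≤ k → k < t → An k ≤ t ∧ v < x k) →
    (∑ k ∈ Finset.Ico j t, γ k) * v < ∑ k ∈ Finset.Ico j t, mkA m γ x An k := by
  intro d
  induction d with
  | zero => intro j t h1 h2; omega
  | succ d ih =>
    intro j t h1 h2 h3 h4
    have hjm : j < m := by omega
    have hAj := h4 j le_rfl h2
    have hAj1 := hAn j hjm
    have key : (∑ k ∈ Finset.Ico j (An j), γ k) * v <
        ∑ k ∈ Finset.Ico j (An j), mkA m γ x An k := by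
      rw [mkA_sum hγ hjm hAj1.1]
      have hpos := gamma_sum_pos hγ hAn hAj1.1 hAj1.2
      nlinarith [hAj.2]
    rcases eq_or_lt_of_le hAj.1 with heq | hlt
    · rw [heq] at key; exact key
    · have key2 : (∑ k ∈ Finset.Ico (An j) t, γ k) * v <
          ∑ k ∈ Finset.Ico (An j) t, mkA m γ x An k := by
        apply ih (An j) t (by omega) hlt h3
        intro k hk1 hk2
        exact h4 k (by omega) hk2
      rw [← Finset.sum_Ico_consecutive _ (le_of_lt hAj1.1) (le_of_lt hlt),
        ← Finset.sum_Ico_consecutive (fun k => mkA m γ x An k) (le_of_lt hAj1.1) (le_of_lt hlt),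
        add_mul]
      linarith

/-- Main estimate: the weighted average over `[i, j)` is maximized uniquely at
`j = An i`, with value `x i`. -/
lemma mkA_main
    (hNC : ∀ i j : ℕ, i < m → i < j → j < An i → An j ≤ An i)
    (hC : ∀ i k : ℕ, i < m → i < k → k < An i → x i < x k)
    (hD : ∀ i : ℕ, i < m → An i < m → x (An i) < x i) :
    ∀ (d i : ℕ), m - i ≤ d → i < m → ∀ j, i < j → j ≤ m →
      (j = An i → ∑ k ∈ Finset.Ico i j, mkA m γ x An k =
        (∑ k ∈ Finset.Ico i j, γ k) * x i) ∧
      (j ≠ An i → ∑ k ∈ Finset.Ico i j, mkA m γ x An k <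
        (∑ k ∈ Finset.Ico i j, γ k) * x i) := by
  intro d
  induction d with
  | zero => intro i h1 h2; omega
  | succ d ih =>
    intro i hd him j hij hjm
    have hAi := hAn i him
    constructor
    · rintro rfl
      exact mkA_sum hγ him hAi.1
    · intro hne
      rcases lt_trichotomy j (An i) with hlt | heq | hgt
      · -- j < An i : use the lower bound on [j, An i)
        have hlow : (∑ k ∈ Finset.Ico j (An i), γ k) * x i <
            ∑ k ∈ Finset.Ico j (An i), mkA m γ x An k := by
          apply mkA_lower hγ hAn (x i) hNC (An i - j) j (An i) le_rfl hlt hAi.2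
          intro k hk1 hk2
          refine ⟨hNC i k him (by omega) (by omega), hC i k him (by omega) (by omega)⟩
        have hsplit := Finset.sum_Ico_consecutive (fun k => mkA m γ x An k)
          (le_of_lt hij) (le_of_lt hlt)
        have hsplitγ := Finset.sum_Ico_consecutive γ (le_of_lt hij) (le_of_lt hlt)
        have heqAn : ∑ k ∈ Finset.Ico i (An i), mkA m γ x An k =
            (∑ k ∈ Finset.Ico i (An i), γ k) * x i := mkA_sum hγ him hAi.1
        rw [← hsplitγ] at heqAn
        rw [← hsplit] at heqAn
        nlinarith
      · exact absurd heq hne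
      · -- j > An i : use induction hypothesis at An i
        have hAim : An i < m := by omega
        have hIH := ih (An i) (by omega) hAim j hgt hjm
        have hle : ∑ k ∈ Finset.Ico (An i) j, mkA m γ x An k ≤
            (∑ k ∈ Finset.Ico (An i) j, γ k) * x (An i) := by
          by_cases hcase : j = An (An i)
          · exact le_of_eq (hIH.1 hcase)
          · exact le_of_lt (hIH.2 hcase)
        have hpos := gamma_sum_pos hγ hAn hgt hjm
        have hxlt := hD i him hAim
        have heqAn : ∑ k ∈ Finset.Ico i (An i), mkA m γ x An k =
            (∑ k ∈ Finset.Ico i (An i), γ k) * x i := mkA_sum hγ him hAi.1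
        rw [← Finset.sum_Ico_consecutive (fun k => mkA m γ x An k)
            (le_of_lt hAi.1) (le_of_lt hgt),
          ← Finset.sum_Ico_consecutive γ (le_of_lt hAi.1) (le_of_lt hgt), add_mul, heqAn]
        nlinarith

end Sums

section Geom

variable {m : ℕ}

/-- Vertices indexed by naturals (constant beyond `m`). -/
def vnat (u : Fin (m + 1) → EuclideanSpace ℝ (Fin m)) : ℕ → EuclideanSpace ℝ (Fin m) :=
  fun i => u ⟨min i m, Nat.lt_succ_of_le (min_le_right i m)⟩

/-- Numerator coefficients of a direction vector `ω`. -/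
noncomputable def anum (u : Fin (m + 1) → EuclideanSpace ℝ (Fin m))
    (ω : EuclideanSpace ℝ (Fin m)) : ℕ → ℝ :=
  fun k => ⟪ω, vnat u (k + 1) - vnat u k⟫

variable {u : Fin (m + 1) → EuclideanSpace ℝ (Fin m)} {c ω : EuclideanSpace ℝ (Fin m)}

lemma vnat_fin (i : Fin (m + 1)) : vnat u (i : ℕ) = u i := by
  have h : min (i:ℕ) m = (i:ℕ) := Nat.min_eq_left (Nat.lt_succ_iff.1 i.2)
  exact congrArg u (Fin.eq_of_val_eq (by simpa using h))

lemma anum_tele (ω : EuclideanSpace ℝ (Fin m)) :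
    ∀ i j : ℕ, i ≤ j → ∑ k ∈ Finset.Ico i j, anum u ω k = ⟪ω, vnat u j - vnat u i⟫ := by
  intro i j h
  induction j, h using Nat.le_induction with
  | base => rw [Finset.Ico_self, Finset.sum_empty, sub_self, inner_zero_right]
  | succ j hij ih =>
    rw [Finset.sum_Ico_succ_top hij, ih]
    show (⟪ω, vnat u j - vnat u i⟫ : ℝ) + ⟪ω, vnat u (j+1) - vnat u j⟫ = _
    rw [← inner_add_right]
    congr 1
    abel

lemma rho_eq (i j : Fin (m + 1)) (h : (i:ℕ) ≤ (j:ℕ)) :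
    rho u c ω i j = (∑ k ∈ Finset.Ico (i:ℕ) (j:ℕ), anum u ω k) /
      (∑ k ∈ Finset.Ico (i:ℕ) (j:ℕ), anum u c k) := by
  rw [anum_tele ω _ _ h, anum_tele c _ _ h, vnat_fin, vnat_fin, rho]

lemma gam_pos (hc : ∀ i j : Fin (m + 1), i < j → ⟪c, u i⟫ < ⟪c, u j⟫)
    {k : ℕ} (hk : k < m) : 0 < anum u c k := by
  unfold anum vnat
  rw [inner_sub_right]
  have h := hc ⟨min k m, Nat.lt_succ_of_le (min_le_right k m)⟩
    ⟨min (k+1) m, Nat.lt_succ_of_le (min_le_right (k+1) m)⟩ (by simp [Fin.lt_def]; omega)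
  linarith

lemma gam_sum_pos (hc : ∀ i j : Fin (m + 1), i < j → ⟪c, u i⟫ < ⟪c, u j⟫)
    {i j : ℕ} (hij : i < j) (hj : j ≤ m) :
    0 < ∑ k ∈ Finset.Ico i j, anum u c k := by
  apply Finset.sum_pos
  · intro k hk
    rw [Finset.mem_Ico] at hk
    exact gam_pos hc (by omega)
  · exact ⟨i, Finset.mem_Ico.2 ⟨le_rfl, hij⟩⟩

lemma bddAbove_slopes (i : Fin (m + 1)) :
    BddAbove {x : ℝ | ∃ j : Fin (m + 1), i < j ∧ x = rho u c ω i j} := by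
  apply Set.Finite.bddAbove
  apply Set.Finite.subset (Set.finite_range (rho u c ω i))
  rintro x ⟨j, _, rfl⟩
  exact ⟨j, rfl⟩

lemma rho_le_tau {i j : Fin (m + 1)} (hij : i < j) :
    rho u c ω i j ≤ tau u c ω i :=
  le_csSup (bddAbove_slopes i) ⟨j, hij, rfl⟩

end Geom

section MediantAlg

lemma mediant_key {s1 s2 s3 w1 w2 w3 : ℝ} (hw1 : 0 < w1) (hw2 : 0 < w2) (hw32 : w2 < w3)
    (b1 : s1 * w2 < s2 * w1) (b2 : s2 * w3 < s3 * w2) :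
    (s1 + s2) * (w1 + w3) < (s1 + s3) * (w1 + w2) := by
  nlinarith [mul_pos (sub_pos.2 hw32) (sub_pos.2 b1), mul_lt_mul_of_pos_left b2 hw1,
    mul_lt_mul_of_pos_left b2 hw2]

lemma mediant_chain {s1 s2 s3 w1 w2 w3 : ℝ} (hw1 : 0 < w1) (hw2 : 0 < w2) (hw32 : w2 < w3)
    (a1 : s1 / w1 < (s1 + s2) / (w1 + w2)) (a2 : s2 / w2 < s3 / w3)
    (a3 : (s1 + s3) / (w1 + w3) ≤ (s1 + s2) / (w1 + w2)) : False := by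
  have hw3 : 0 < w3 := hw2.trans hw32
  have hw12 : 0 < w1 + w2 := by linarith
  have hw13 : 0 < w1 + w3 := by linarith
  have b1 : s1 * w2 < s2 * w1 := by
    have := (div_lt_div_iff₀ hw1 hw12).1 a1
    nlinarith
  have b2 : s2 * w3 < s3 * w2 := (div_lt_div_iff₀ hw2 hw3).1 a2
  have b3 := (div_le_div_iff₀ hw13 hw12).1 a3
  have := mediant_key hw1 hw2 hw32 b1 b2
  linarith

lemma mediant_up {s1 s2 w1 w2 : ℝ} (hw1 : 0 < w1) (hw2 : 0 < w2)
    (a1 : s1 / w1 < (s1 + s2) / (w1 + w2)) : (s1 + s2) / (w1 + w2) < s2 / w2 := by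
  have hw12 : 0 < w1 + w2 := by linarith
  have b1 : s1 * w2 < s2 * w1 := by
    have := (div_lt_div_iff₀ hw1 hw12).1 a1
    nlinarith
  rw [div_lt_div_iff₀ hw12 hw2]
  nlinarith

end MediantAlg

section Fiber

variable {m : ℕ} {u : Fin (m + 1) → EuclideanSpace ℝ (Fin m)}
  {c ω₁ : EuclideanSpace ℝ (Fin m)} {A : Fin (m + 1) → Fin (m + 1)}
  (hc : ∀ i j : Fin (m + 1), i < j → ⟪c, u i⟫ < ⟪c, u j⟫)
  (hg : StronglyGeneric u c ω₁) (hA : IsArbo u c ω₁ A)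

include hg hA

lemma tau_eq_rho {i : Fin (m + 1)} (hi : (i : ℕ) < m) :
    tau u c ω₁ i = rho u c ω₁ i (A i) := ((hA.2 i (by omega)).2).symm

omit hg in
lemma lt_A {i : Fin (m + 1)} (hi : (i : ℕ) < m) : i < A i := (hA.2 i (by omega)).1

lemma rho_lt_tau {i j : Fin (m + 1)} (hi : (i : ℕ) < m) (hij : i < j) (hne : j ≠ A i) :
    rho u c ω₁ i j < tau u c ω₁ i := by
  refine lt_of_le_of_ne (rho_le_tau hij) ?_
  intro heq
  obtain ⟨j', _, huniq⟩ := hg.1 i (by omega)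
  have h1 := huniq j ⟨hij, heq⟩
  have h2 := huniq (A i) ⟨lt_A hA hi, (hA.2 i (by omega)).2⟩
  exact hne (h1.trans h2.symm)

include hc

lemma arbo_noncross {i j : Fin (m + 1)} (hij : i < j) (hjA : j < A i) :
    (A j : ℕ) ≤ (A i : ℕ) := by
  by_contra hcon
  push_neg at hcon
  have hAi : (A i : ℕ) ≤ m := Fin.is_le _
  have hAj : (A j : ℕ) ≤ m := Fin.is_le _
  have him : (i : ℕ) < m := by
    have := Fin.lt_def.1 hij; have := Fin.lt_def.1 hjA; omega
  have hjm : (j : ℕ) < m := by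
    have := Fin.lt_def.1 hjA; omega
  have hij' := Fin.lt_def.1 hij
  have hjA' := Fin.lt_def.1 hjA
  have hiAj : i < A j := lt_trans (lt_trans hij hjA) (Fin.lt_def.2 hcon)
  have hjAj : j < A j := lt_trans hjA (Fin.lt_def.2 hcon)
  have h1 : rho u c ω₁ i j < rho u c ω₁ i (A i) := by
    rw [← tau_eq_rho hg hA him]
    exact rho_lt_tau hg hA him hij (Fin.ne_of_lt hjA)
  have h2 : rho u c ω₁ j (A i) < rho u c ω₁ j (A j) := by
    rw [← tau_eq_rho hg hA hjm]
    exact rho_lt_tau hg hA hjm hjA (by intro hh; rw [hh] at hcon; omega)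
  have h3 : rho u c ω₁ i (A j) ≤ rho u c ω₁ i (A i) := by
    rw [← tau_eq_rho hg hA him]
    exact rho_le_tau hiAj
  rw [rho_eq i j (by omega), rho_eq i (A i) (by omega)] at h1
  rw [rho_eq j (A i) (by omega), rho_eq j (A j) (by omega)] at h2
  rw [rho_eq i (A j) (by omega), rho_eq i (A i) (by omega)] at h3
  rw [← Finset.sum_Ico_consecutive (anum u ω₁) (le_of_lt hij') (le_of_lt hjA'),
    ← Finset.sum_Ico_consecutive (anum u c) (le_of_lt hij') (le_of_lt hjA')] at h1 h3
  rw [← Finset.sum_Ico_consecutive (anum u ω₁) (le_of_lt hij') (by omega : (j:ℕ) ≤ (A j : ℕ)),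
    ← Finset.sum_Ico_consecutive (anum u c) (le_of_lt hij') (by omega : (j:ℕ) ≤ (A j : ℕ))] at h3
  -- split [j, A j) = [j, A i) + [A i, A j) in h2's right side? No: keep as is.
  have hw1 : 0 < ∑ k ∈ Finset.Ico (i:ℕ) (j:ℕ), anum u c k := gam_sum_pos hc hij' (by omega)
  have hw2 : 0 < ∑ k ∈ Finset.Ico (j:ℕ) (A i:ℕ), anum u c k := gam_sum_pos hc hjA' hAi
  have hw32 : (∑ k ∈ Finset.Ico (j:ℕ) (A i:ℕ), anum u c k) <
      ∑ k ∈ Finset.Ico (j:ℕ) (A j:ℕ), anum u c k := by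
    rw [← Finset.sum_Ico_consecutive (anum u c) (le_of_lt hjA') (le_of_lt hcon)]
    have := gam_sum_pos hc (u := u) hcon hAj
    linarith
  exact mediant_chain hw1 hw2 hw32 h1 h2 h3

lemma tau_lt_of_between {i k : Fin (m + 1)} (him : (i : ℕ) < m) (hik : i < k)
    (hkA : k < A i) : tau u c ω₁ i < tau u c ω₁ k := by
  have hAi : (A i : ℕ) ≤ m := Fin.is_le _
  have hik' := Fin.lt_def.1 hik
  have hkA' := Fin.lt_def.1 hkA
  have hkm : (k : ℕ) < m := by omega
  have h1 : rho u c ω₁ i k < rho u c ω₁ i (A i) := by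
    rw [← tau_eq_rho hg hA him]
    exact rho_lt_tau hg hA him hik (Fin.ne_of_lt hkA)
  rw [rho_eq i k (by omega), rho_eq i (A i) (by omega)] at h1
  rw [← Finset.sum_Ico_consecutive (anum u ω₁) (le_of_lt hik') (le_of_lt hkA'),
    ← Finset.sum_Ico_consecutive (anum u c) (le_of_lt hik') (le_of_lt hkA')] at h1
  have hw1 : 0 < ∑ k' ∈ Finset.Ico (i:ℕ) (k:ℕ), anum u c k' := gam_sum_pos hc hik' (by omega)
  have hw2 : 0 < ∑ k' ∈ Finset.Ico (k:ℕ) (A i:ℕ), anum u c k' := gam_sum_pos hc hkA' hAi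
  have hup := mediant_up hw1 hw2 h1
  have heq : tau u c ω₁ i = (∑ k' ∈ Finset.Ico (i:ℕ) (k:ℕ), anum u ω₁ k' +
      ∑ k' ∈ Finset.Ico (k:ℕ) (A i:ℕ), anum u ω₁ k') /
      (∑ k' ∈ Finset.Ico (i:ℕ) (k:ℕ), anum u c k' +
      ∑ k' ∈ Finset.Ico (k:ℕ) (A i:ℕ), anum u c k') := by
    rw [tau_eq_rho hg hA him, rho_eq _ _ (by omega),
      ← Finset.sum_Ico_consecutive (anum u ω₁) (le_of_lt hik') (le_of_lt hkA'),
      ← Finset.sum_Ico_consecutive (anum u c) (le_of_lt hik') (le_of_lt hkA')]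
  have hrk : rho u c ω₁ k (A i) = (∑ k' ∈ Finset.Ico (k:ℕ) (A i:ℕ), anum u ω₁ k') /
      (∑ k' ∈ Finset.Ico (k:ℕ) (A i:ℕ), anum u c k') := rho_eq _ _ (by omega)
  calc tau u c ω₁ i < rho u c ω₁ k (A i) := by rw [heq, hrk]; exact hup
    _ ≤ tau u c ω₁ k := rho_le_tau hkA

lemma tau_A_lt {i : Fin (m + 1)} (him : (i : ℕ) < m) (hAm : (A i : ℕ) < m) :
    tau u c ω₁ (A i) < tau u c ω₁ i := by
  have hiA := lt_A hA him
  have hne : tau u c ω₁ (A i) ≠ tau u c ω₁ i := by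
    intro heq
    have h1 : (⟨(A i : ℕ), hAm⟩ : Fin m).castSucc = A i := Fin.ext (by simp)
    have h2 : (⟨(i : ℕ), him⟩ : Fin m).castSucc = i := Fin.ext (by simp)
    have := hg.2 (a₁ := ⟨(A i : ℕ), hAm⟩) (a₂ := ⟨(i : ℕ), him⟩)
      (by simp only [h1, h2]; exact heq)
    rw [Fin.ext_iff] at this
    simp only [Fin.val_mk] at this
    have := Fin.lt_def.1 hiA
    omega
  rcases lt_or_ge (tau u c ω₁ (A i)) (tau u c ω₁ i) with h | h
  · exact h
  exfalso
  have hgt : tau u c ω₁ i < tau u c ω₁ (A i) := lt_of_le_of_ne h (Ne.symm hne)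
  set J := A i with hJ
  have hJK := lt_A hA hAm
  set K := A J with hK
  have hiJ' := Fin.lt_def.1 hiA
  have hJK' := Fin.lt_def.1 hJK
  have hKm : (K : ℕ) ≤ m := Fin.is_le _
  have hw1 : 0 < ∑ k' ∈ Finset.Ico (i:ℕ) (J:ℕ), anum u c k' := gam_sum_pos hc hiJ' (by omega)
  have hw2 : 0 < ∑ k' ∈ Finset.Ico (J:ℕ) (K:ℕ), anum u c k' := gam_sum_pos hc hJK' hKm
  have hs1 : ∑ k' ∈ Finset.Ico (i:ℕ) (J:ℕ), anum u ω₁ k' =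
      tau u c ω₁ i * ∑ k' ∈ Finset.Ico (i:ℕ) (J:ℕ), anum u c k' := by
    have := tau_eq_rho hg hA him
    rw [rho_eq i (A i) (by omega)] at this
    rw [this, div_mul_cancel₀]
    exact ne_of_gt hw1
  have hs2 : ∑ k' ∈ Finset.Ico (J:ℕ) (K:ℕ), anum u ω₁ k' =
      tau u c ω₁ J * ∑ k' ∈ Finset.Ico (J:ℕ) (K:ℕ), anum u c k' := by
    have := tau_eq_rho hg hA hAm
    rw [rho_eq J (A J) (by omega)] at this
    rw [this, div_mul_cancel₀]
    exact ne_of_gt hw2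
  have h3 : rho u c ω₁ i K ≤ tau u c ω₁ i := rho_le_tau (lt_trans hiA hJK)
  rw [rho_eq i K (by omega),
    ← Finset.sum_Ico_consecutive (anum u ω₁) (le_of_lt hiJ') (le_of_lt hJK'),
    ← Finset.sum_Ico_consecutive (anum u c) (le_of_lt hiJ') (le_of_lt hJK'),
    hs1, hs2] at h3
  rw [div_le_iff₀ (by linarith)] at h3
  nlinarith

end Fiber

section Surj

variable {m : ℕ} {u : Fin (m + 1) → EuclideanSpace ℝ (Fin m)}

lemma vnat_tele : ∀ i j : ℕ, i ≤ j →
    vnat u j - vnat u i = ∑ k ∈ Finset.Ico i j, (vnat u (k + 1) - vnat u k) := by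
  intro i j h
  induction j, h using Nat.le_induction with
  | base => rw [Finset.Ico_self, Finset.sum_empty, sub_self]
  | succ j hij ih =>
    rw [Finset.sum_Ico_succ_top hij, ← ih]
    abel

lemma exists_omega (hm : 1 ≤ m) (hu : AffineIndependent ℝ u) (t : ℕ → ℝ) :
    ∃ ω' : EuclideanSpace ℝ (Fin m), ∀ k, k < m → anum u ω' k = t k := by
  classical
  set w : Fin m → EuclideanSpace ℝ (Fin m) :=
    fun k => vnat u ((k : ℕ) + 1) - vnat u (k : ℕ) with hw
  have hli : LinearIndependent ℝ (fun j : {x : Fin (m + 1) // x ≠ 0} => u j.1 - u 0) := by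
    have := (affineIndependent_iff_linearIndependent_vsub ℝ u 0).1 hu
    simpa [vsub_eq_sub] using this
  have hcard : Fintype.card {x : Fin (m + 1) // x ≠ 0} = m := by simp
  have hne : Nonempty {x : Fin (m + 1) // x ≠ 0} :=
    ⟨⟨⟨1, by omega⟩, by simp [Fin.ext_iff]⟩⟩
  have hsp : Submodule.span ℝ
      (Set.range fun j : {x : Fin (m + 1) // x ≠ 0} => u j.1 - u 0) = ⊤ :=
    hli.span_eq_top_of_card_eq_finrank (by rw [hcard, finrank_euclideanSpace_fin])
  have hspan : Submodule.span ℝ (Set.range w) = ⊤ := by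
    rw [eq_top_iff, ← hsp, Submodule.span_le]
    rintro v ⟨j, rfl⟩
    have htele := vnat_tele (u := u) 0 (j.1 : ℕ) (Nat.zero_le _)
    have h0 : vnat u ((j.1 : Fin (m+1)) : ℕ) = u j.1 := vnat_fin _
    have h00 : vnat u ((0 : Fin (m + 1)) : ℕ) = u 0 := vnat_fin _
    simp only [Fin.val_zero] at h00
    have key : u j.1 - u 0 = ∑ k ∈ Finset.Ico 0 (j.1 : ℕ), (vnat u (k + 1) - vnat u k) := by
      rw [← h0, ← h00]
      exact htele
    simp only [SetLike.mem_coe]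
    rw [key]
    apply Submodule.sum_mem
    intro k hk
    rw [Finset.mem_Ico] at hk
    have hkm : k < m := by
      have := j.1.2
      omega
    exact Submodule.subset_span ⟨⟨k, hkm⟩, rfl⟩
  set Φ : EuclideanSpace ℝ (Fin m) →ₗ[ℝ] (Fin m → ℝ) :=
    LinearMap.pi (fun k : Fin m => (innerₛₗ ℝ) (w k)) with hΦ
  have hinj : Function.Injective Φ := by
    rw [← LinearMap.ker_eq_bot]
    rw [Submodule.eq_bot_iff]
    intro ω hω
    rw [LinearMap.mem_ker] at hω
    have hωo : ω ∈ (Submodule.span ℝ (Set.range w))ᗮ := by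
      rw [Submodule.mem_orthogonal]
      intro v hv
      refine Submodule.span_induction ?_ ?_ ?_ ?_ hv
      · rintro _ ⟨k, rfl⟩
        have := congrFun hω k
        simpa [hΦ, LinearMap.pi_apply] using this
      · exact inner_zero_left ω
      · intro a b _ _ ha hb
        rw [inner_add_left, ha, hb, add_zero]
      · intro a x _ hx
        rw [real_inner_smul_left, hx, mul_zero]
    rw [hspan, Submodule.top_orthogonal_eq_bot, Submodule.mem_bot] at hωo
    exact hωo
  have hsurj : Function.Surjective Φ :=
    (LinearMap.injective_iff_surjective_of_finrank_eq_finrank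
      (by rw [finrank_euclideanSpace_fin, Module.finrank_fin_fun])).1 hinj
  obtain ⟨ω', hω'⟩ := hsurj (fun k : Fin m => t (k : ℕ))
  refine ⟨ω', fun k hk => ?_⟩
  have hk' := congrFun hω' ⟨k, hk⟩
  simp only [hΦ, LinearMap.pi_apply] at hk'
  have : ((innerₛₗ ℝ) (w ⟨k, hk⟩)) ω' = ⟪w ⟨k, hk⟩, ω'⟫ := rfl
  rw [this] at hk'
  rw [show anum u ω' k = ⟪ω', vnat u (k + 1) - vnat u k⟫ from rfl, real_inner_comm]
  exact hk'

end Surj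

section Bridge

variable {m : ℕ} {An : ℕ → ℕ}

lemma linext_of_sorting {x : Fin m → ℝ} {σ : Equiv.Perm (Fin m)}
    (hmono : StrictMono fun q => x (σ q))
    (hcone : ∀ p q, BaseRel m An p q → x p < x q) : LinExt m An σ := by
  intro p q hbase
  have hx := hcone p q hbase
  rcases lt_trichotomy (σ.symm p) (σ.symm q) with h | h | h
  · exact h
  · exfalso
    have hpq : p = q := by
      have := congrArg σ h
      simpa using this
    rw [hpq] at hx
    exact absurd hx (lt_irrefl _)
  · exfalso
    have := hmono h
    simp only [Equiv.apply_symm_apply] at this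
    exact absurd (hx.trans this) (lt_irrefl _)

lemma cone_of_linext {x : Fin m → ℝ} {σ : Equiv.Perm (Fin m)}
    (hmono : StrictMono fun q => x (σ q)) (hL : LinExt m An σ) :
    ∀ p q, BaseRel m An p q → x p < x q := by
  intro p q hb
  have := hmono (hL p q hb)
  simpa using this

variable {u : Fin (m + 1) → EuclideanSpace ℝ (Fin m)}
  {c ω₁ : EuclideanSpace ℝ (Fin m)} {A : Fin (m + 1) → Fin (m + 1)}

lemma theta_cone (hc : ∀ i j : Fin (m + 1), i < j → ⟪c, u i⟫ < ⟪c, u j⟫)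
    (hg : StronglyGeneric u c ω₁) (hA : IsArbo u c ω₁ A)
    (hAdef : ∀ p : Fin m, An (p : ℕ) = (A p.castSucc : ℕ)) :
    ∀ p q : Fin m, BaseRel m An p q → theta u c ω₁ p < theta u c ω₁ q := by
  intro p q hbase
  rcases hbase with ⟨hpq, hq⟩ | hp
  · rw [hAdef] at hq
    exact tau_lt_of_between hc hg hA (by simpa using p.2) (Fin.lt_def.2 (by simpa using hpq))
      (Fin.lt_def.2 (by simpa using hq))
  · have hp' : p.castSucc = A q.castSucc := Fin.eq_of_val_eq (by
      rw [Fin.coe_castSucc, hp, hAdef])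
    show tau u c ω₁ p.castSucc < tau u c ω₁ q.castSucc
    rw [hp']
    refine tau_A_lt hc hg hA (by simpa using q.2) ?_
    rw [← hp']
    simpa using p.2

lemma construct_fiber (hm : 1 ≤ m) (hu : AffineIndependent ℝ u)
    (hc : ∀ i j : Fin (m + 1), i < j → ⟪c, u i⟫ < ⟪c, u j⟫)
    (hA1 : ∀ i : Fin (m + 1), (i : ℕ) + 1 = m + 1 → A i = i)
    (hAdef : ∀ p : Fin m, An (p : ℕ) = (A p.castSucc : ℕ))
    (hAn : ∀ i, i < m → i < An i ∧ An i ≤ m)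
    (hNC : ∀ i j, i < m → i < j → j < An i → An j ≤ An i)
    (X : Fin m → ℝ) (hXinj : Function.Injective X)
    (hcone : ∀ p q, BaseRel m An p q → X p < X q) :
    ∃ ω' : EuclideanSpace ℝ (Fin m),
      (StronglyGeneric u c ω' ∧ IsArbo u c ω' A) ∧ theta u c ω' = X := by
  classical
  set xnat : ℕ → ℝ := fun k => if h : k < m then X ⟨k, h⟩ else 0 with hxnat
  have hγ : ∀ k, k < m → 0 < anum u c k := fun k hk => gam_pos hc hk
  have hC : ∀ i k : ℕ, i < m → i < k → k < An i → xnat i < xnat k := by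
    intro i k him hik hkA
    have hkm : k < m := by have := hAn i him; omega
    have := hcone ⟨i, him⟩ ⟨k, hkm⟩ (Or.inl ⟨by simpa using hik, by simpa using hkA⟩)
    simpa [hxnat, him, hkm] using this
  have hD : ∀ i : ℕ, i < m → An i < m → xnat (An i) < xnat i := by
    intro i him hAm
    have := hcone ⟨An i, hAm⟩ ⟨i, him⟩ (Or.inr (by simp))
    simpa [hxnat, him, hAm] using this
  obtain ⟨ω', hω'⟩ := exists_omega hm hu (mkA m (anum u c) xnat An)
  have hsum_eq : ∀ i j : ℕ, j ≤ m →
      ∑ k ∈ Finset.Ico i j, anum u ω' k = ∑ k ∈ Finset.Ico i j, mkA m (anum u c) xnat An k := by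
    intro i j hj
    apply Finset.sum_congr rfl
    intro k hk
    rw [Finset.mem_Ico] at hk
    exact hω' k (by omega)
  have hMain := mkA_main (γ := anum u c) (x := xnat) (An := An) hγ hAn hNC hC hD m
  -- key slope facts for ω'
  have key : ∀ i : Fin (m + 1), (him : (i : ℕ) < m) →
      (i < A i) ∧ rho u c ω' i (A i) = xnat (i : ℕ) ∧
      (∀ j : Fin (m + 1), i < j → j ≠ A i → rho u c ω' i j < xnat (i : ℕ)) := by
    intro i him
    have hifm : ((⟨(i : ℕ), him⟩ : Fin m).castSucc) = i := Fin.eq_of_val_eq (by simp)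
    have hAival : An (i : ℕ) = (A i : ℕ) := by
      have := hAdef ⟨(i : ℕ), him⟩
      rw [hifm] at this
      simpa using this
    have hAnn := hAn (i : ℕ) him
    have hiA : i < A i := Fin.lt_def.2 (by omega)
    have hAile : (A i : ℕ) ≤ m := Fin.is_le _
    have hrho : ∀ j : Fin (m + 1), (i : ℕ) < (j : ℕ) →
        rho u c ω' i j = (∑ k ∈ Finset.Ico (i:ℕ) (j:ℕ), mkA m (anum u c) xnat An k) /
          (∑ k ∈ Finset.Ico (i:ℕ) (j:ℕ), anum u c k) := by
      intro j hij
      rw [rho_eq i j (by omega), hsum_eq _ _ (Fin.is_le _)]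
    have hW : ∀ j : Fin (m + 1), (i:ℕ) < (j:ℕ) →
        0 < ∑ k ∈ Finset.Ico (i:ℕ) (j:ℕ), anum u c k :=
      fun j hij => gam_sum_pos hc hij (Fin.is_le _)
    refine ⟨hiA, ?_, ?_⟩
    · rw [hrho (A i) (by omega)]
      have := (hMain (i : ℕ) (by omega) him (A i : ℕ) (by omega) hAile).1 hAival.symm
      rw [this]
      exact mul_div_cancel_left₀ _ (ne_of_gt (hW (A i) (by omega)))
    · intro j hij hne
      have hij' := Fin.lt_def.1 hij
      have hnv : (j : ℕ) ≠ An (i : ℕ) := by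
        intro hh
        exact hne (Fin.eq_of_val_eq (by omega))
      have := (hMain (i : ℕ) (by omega) him (j : ℕ) hij' (Fin.is_le _)).2 hnv
      rw [hrho j hij']
      rw [div_lt_iff₀ (hW j hij')]
      linarith
  have htau : ∀ i : Fin (m + 1), (i : ℕ) < m → tau u c ω' i = xnat (i : ℕ) := by
    intro i him
    obtain ⟨hiA, heq, hlt⟩ := key i him
    have hgr : IsGreatest {z : ℝ | ∃ j : Fin (m + 1), i < j ∧ z = rho u c ω' i j}
        (xnat (i : ℕ)) := by
      constructor
      · exact ⟨A i, hiA, heq.symm⟩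
      · rintro z ⟨j, hj, rfl⟩
        by_cases hcase : j = A i
        · rw [hcase, heq]
        · exact le_of_lt (hlt j hj hcase)
    exact hgr.csSup_eq
  have hXval : ∀ i : Fin m, tau u c ω' i.castSucc = X i := by
    intro i
    rw [htau i.castSucc (by simpa using i.2)]
    simp [hxnat, i.2]
  have hGen : Generic u c ω' := by
    intro i hi
    have him : (i : ℕ) < m := by omega
    obtain ⟨hiA, heq, hlt⟩ := key i him
    refine ⟨A i, ⟨hiA, by rw [heq, htau i him]⟩, ?_⟩
    rintro j ⟨hj1, hj2⟩
    by_contra hne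
    have := hlt j hj1 hne
    rw [hj2, htau i him] at this
    exact absurd this (lt_irrefl _)
  have hSG : StronglyGeneric u c ω' := by
    refine ⟨hGen, ?_⟩
    intro a b hab
    apply hXinj
    rw [← hXval a, ← hXval b]
    exact hab
  have hArbo : IsArbo u c ω' A := by
    constructor
    · exact hA1
    · intro i hi
      have him : (i : ℕ) < m := by omega
      obtain ⟨hiA, heq, _⟩ := key i him
      exact ⟨hiA, by rw [heq, htau i him]⟩
  refine ⟨ω', ⟨hSG, hArbo⟩, ?_⟩
  funext i
  exact hXval i

end Bridge


/-- the slope map sends the (strongly generic part of the) fiber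
of the arborescence `A^ω` onto the open cone of the sylvester fan consisting of
the points whose sorting permutation is sylvester congruent to `π^ω`. -/
theorem slope_map_image_of_fiber (m : ℕ) (hm : 1 ≤ m)
    (u : Fin (m + 1) → EuclideanSpace ℝ (Fin m)) (hu : AffineIndependent ℝ u)
    (c : EuclideanSpace ℝ (Fin m))
    (hc : ∀ i j : Fin (m + 1), i < j → ⟪c, u i⟫ < ⟪c, u j⟫)
    (ω : EuclideanSpace ℝ (Fin m)) (hω : StronglyGeneric u c ω)
    (A : Fin (m + 1) → Fin (m + 1)) (hA : IsArbo u c ω A)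
    (π : Equiv.Perm (Fin m))
    (hπ : StrictMono fun q : Fin m => tau u c ω ((π q).castSucc)) :
    theta u c '' {ω' : EuclideanSpace ℝ (Fin m) |
        StronglyGeneric u c ω' ∧ IsArbo u c ω' A} =
      {x : Fin m → ℝ | Function.Injective x ∧
        ∀ σ : Equiv.Perm (Fin m), (StrictMono fun q : Fin m => x (σ q)) →
          Sylv m σ π} := by
  classical
  set An : ℕ → ℕ := fun i => if h : i < m then (A (Fin.castSucc ⟨i, h⟩) : ℕ) else m + 1
    with hAndef
  have hAdef : ∀ p : Fin m, An (p : ℕ) = (A p.castSucc : ℕ) := by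
    intro p
    simp only [hAndef, p.2, dif_pos, Fin.eta]
  have hAn : ∀ i, i < m → i < An i ∧ An i ≤ m := by
    intro i hi
    have h1 := lt_A hA (i := Fin.castSucc (⟨i, hi⟩ : Fin m)) (by simpa using hi)
    have hv := Fin.lt_def.1 h1
    simp only [Fin.coe_castSucc, Fin.val_mk] at hv
    have hd := hAdef ⟨i, hi⟩
    simp only [Fin.val_mk] at hd
    rw [hd]
    exact ⟨hv, Fin.is_le _⟩
  have hNC : ∀ i j, i < m → i < j → j < An i → An j ≤ An i := by
    intro i j hi hij hjA
    have hdi := hAdef ⟨i, hi⟩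
    simp only [Fin.val_mk] at hdi
    have hjm : j < m := by
      have := hAn i hi
      omega
    have hdj := hAdef ⟨j, hjm⟩
    simp only [Fin.val_mk] at hdj
    rw [hdi] at hjA
    have h := arbo_noncross hc hω hA (i := Fin.castSucc ⟨i, hi⟩) (j := Fin.castSucc ⟨j, hjm⟩)
      (Fin.lt_def.2 (by simpa using hij)) (Fin.lt_def.2 (by simpa using hjA))
    rw [hdi, hdj]
    exact h
  ext x
  simp only [Set.mem_image, Set.mem_setOf_eq]
  constructor
  · rintro ⟨ω₁, ⟨hg1, hA1'⟩, rfl⟩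
    refine ⟨hg1.2, ?_⟩
    intro σ hσ
    have hLσ : LinExt m An σ := linext_of_sorting hσ (theta_cone hc hg1 hA1' hAdef)
    have hLπ : LinExt m An π :=
      linext_of_sorting (x := theta u c ω) hπ (theta_cone hc hω hA hAdef)
    exact sylv_connect hAn hLσ hLπ
  · rintro ⟨hxinj, hsylv⟩
    have hmono : StrictMono fun q => x (Tuple.sort x q) := by
      have h1 : Monotone (x ∘ Tuple.sort x) := Tuple.monotone_sort x
      have h2 : Function.Injective (x ∘ Tuple.sort x) := hxinj.comp (Tuple.sort x).injective
      exact h1.strictMono_of_injective h2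
    have hS := hsylv (Tuple.sort x) hmono
    have hLπ : LinExt m An π :=
      linext_of_sorting (x := theta u c ω) hπ (theta_cone hc hω hA hAdef)
    have hLσ : LinExt m An (Tuple.sort x) := linExt_of_sylv hAn hS hLπ
    have hcone := cone_of_linext hmono hLσ
    obtain ⟨ω', hfib, hθ⟩ := construct_fiber hm hu hc hA.1 hAdef hAn hNC x hxinj hcone
    exact ⟨ω', hfib, hθ⟩
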